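/- Let ω be a weight, let γ > 0, and let (r_k) be a non-decreasing sequence in [0,1) with r_1 = 0, each r_k (k≥2) maximizing x^(k-1)/ω(x), and r_k^(k-1) → γ. Then there exists a positive integer m₀ such that for all k ≥ m₀ and all x ∈ [r_k, r_{k+1}], ω(r_k) x^(k-1)/ω(x) ≥ γ/2. -/

import Mathlib

open Set Filter Topology

theorem maximizer_lower_bound (ω : ℝ → ℝ)
    (hωc : ContinuousOn ω (Ico 0 1))
    (hωm : MonotoneOn ω (Ico 0 1))
    (hωp : ∀ x ∈ Ico (0:ℝ) 1, 0 < ω x)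
    (hωu : ∀ M : ℝ, ∃ x ∈ Ico (0:ℝ) 1, M < ω x)
    (γ : ℝ) (hγ : 0 < γ)
    (r : ℕ → ℝ) (hr1 : r 1 = 0)
    (hrmono : ∀ k l : ℕ, k ≤ l → r k ≤ r l)
    (hrmem : ∀ k, r k ∈ Ico (0:ℝ) 1)
    (hrmax : ∀ k, 2 ≤ k → ∀ x ∈ Ico (0:ℝ) 1,
      x ^ (k - 1) / ω x ≤ (r k) ^ (k - 1) / ω (r k))
    (hlim : Tendsto (fun k : ℕ => (r k) ^ (k - 1)) atTop (𝓝 γ)) :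
    ∃ m₀ : ℕ, 0 < m₀ ∧ ∀ k, m₀ ≤ k → ∀ x ∈ Icc (r k) (r (k + 1)),
      γ / 2 ≤ ω (r k) * x ^ (k - 1) / ω x := by
  have hmono : Monotone r := fun a b h => hrmono a b h
  have hbdd : BddAbove (Set.range r) := ⟨1, by rintro y ⟨k, rfl⟩; exact (hrmem k).2.le⟩
  set L := ⨆ k, r k with hLdef
  have hL : Tendsto r atTop (𝓝 L) := tendsto_atTop_ciSup hmono hbdd
  have hL0 : 0 ≤ L := le_trans (hrmem 0).1 (le_ciSup hbdd 0)
  have hL1 : L ≤ 1 := ciSup_le fun k => (hrmem k).2.le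
  have hLeq : L = 1 := by
    by_contra h
    have hLlt : L < 1 := lt_of_le_of_ne hL1 h
    have h0 : Tendsto (fun k : ℕ => L ^ (k - 1)) atTop (𝓝 0) := by
      have := (tendsto_pow_atTop_nhds_zero_of_lt_one hL0 hLlt).comp
        (tendsto_sub_atTop_nat 1)
      simpa [Function.comp_def] using this
    have hsq : Tendsto (fun k : ℕ => (r k) ^ (k - 1)) atTop (𝓝 0) := by
      refine tendsto_of_tendsto_of_tendsto_of_le_of_le tendsto_const_nhds h0 ?_ ?_
      · intro k; exact pow_nonneg (hrmem k).1 _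
      · intro k; exact pow_le_pow_left₀ (hrmem k).1 (le_ciSup hbdd k) _
    exact hγ.ne' (tendsto_nhds_unique hlim hsq)
  have rone : Tendsto r atTop (𝓝 1) := hLeq ▸ hL
  have hlim' : Tendsto (fun k : ℕ => (r (k + 1)) ^ k) atTop (𝓝 γ) := by
    have := hlim.comp (tendsto_add_atTop_nat 1)
    simpa [Function.comp_def] using this
  have hf : Tendsto (fun k : ℕ => ((r k) ^ (k - 1)) ^ 2 * r k / (r (k + 1)) ^ k)
      atTop (𝓝 γ) := by
    have h := ((hlim.pow 2).mul rone).div hlim' hγ.ne'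
    have : Tendsto (fun k : ℕ => ((r k) ^ (k - 1)) ^ 2 * r k / (r (k + 1)) ^ k)
        atTop (𝓝 (γ ^ 2 * 1 / γ)) := h
    have heq : γ ^ 2 * 1 / γ = γ := by field_simp
    rwa [heq] at this
  have hev1 : ∀ᶠ k in atTop, γ / 2 < ((r k) ^ (k - 1)) ^ 2 * r k / (r (k + 1)) ^ k :=
    hf.eventually (eventually_gt_nhds (by linarith))
  have hev2 : ∀ᶠ k in atTop, (0:ℝ) < r k :=
    rone.eventually (eventually_gt_nhds one_pos)
  obtain ⟨N, hN⟩ := (hev1.and hev2).exists_forall_of_atTop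
  refine ⟨max N 2, lt_of_lt_of_le two_pos (le_max_right _ _), ?_⟩
  intro k hk x hx
  have hk2 : 2 ≤ k := le_trans (le_max_right N 2) hk
  have hkN : N ≤ k := le_trans (le_max_left N 2) hk
  obtain ⟨hfk, hrk⟩ := hN k hkN
  have hxmem : x ∈ Ico (0:ℝ) 1 :=
    ⟨le_trans (hrmem k).1 hx.1, lt_of_le_of_lt hx.2 (hrmem (k + 1)).2⟩
  have hrk1 : 0 < r (k + 1) := lt_of_lt_of_le hrk (hrmono k (k + 1) (Nat.le_succ k))
  have hwA : 0 < ω (r k) := hωp _ (hrmem k)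
  have hwX : 0 < ω x := hωp _ hxmem
  have hwB : 0 < ω (r (k + 1)) := hωp _ (hrmem (k + 1))
  have hwXB : ω x ≤ ω (r (k + 1)) := hωm hxmem (hrmem (k + 1)) hx.2
  have hA : r k ^ k * ω (r (k + 1)) ≤ r (k + 1) ^ k * ω (r k) := by
    have := hrmax (k + 1) (by omega) (r k) (hrmem k)
    simp only [Nat.add_sub_cancel] at this
    exact (div_le_div_iff₀ hwA hwB).mp this
  set A := r k ^ (k - 1) with hAdef
  set B := r (k + 1) ^ k with hBdef
  have hApos : 0 < A := pow_pos hrk _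
  have hBpos : 0 < B := pow_pos hrk1 _
  have hck : r k ^ k = A * r k := by
    rw [hAdef, ← pow_succ]
    congr 1
    omega
  have hAX : A ≤ x ^ (k - 1) := pow_le_pow_left₀ hrk.le hx.1 _
  rw [le_div_iff₀ hwX]
  have h1 : γ / 2 * ω x ≤ (A ^ 2 * r k / B) * ω (r (k + 1)) :=
    mul_le_mul hfk.le hwXB hwX.le (by positivity)
  have h2 : (A ^ 2 * r k / B) * ω (r (k + 1)) ≤ ω (r k) * A := by
    rw [div_mul_eq_mul_div, div_le_iff₀ hBpos]
    have := mul_le_mul_of_nonneg_left hA hApos.le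
    rw [hck] at this
    nlinarith [this]
  have h3 : ω (r k) * A ≤ ω (r k) * x ^ (k - 1) :=
    mul_le_mul_of_nonneg_left hAX hwA.le
  linarith
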